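/- arXiv:1506.00733 — 6 statements merged into one kernel-verified Lean document; each statement's English description precedes it below -/
import Mathlib

section
/- Let 0 < ρ < 1, 0 < δ < 1, and let ℓ be a positive integer with ℓ > (log(1/δ))/(ρ(1-ρ)). Then for all real θ, |ρ + (1-ρ)e^{2πiθ}|^{2ℓ} ≤ 1 - (1-δ)sin²(πθ). -/
open Real Complex

theorem stmt_1 (ρ δ : ℝ) (hρ : 0 < ρ) (hρ1 : ρ < 1) (hδ : 0 < δ) (hδ1 : δ < 1)
    (ℓ : ℕ) (hℓpos : 0 < ℓ) (hℓ : Real.log (1 / δ) / (ρ * (1 - ρ)) < ℓ) (θ : ℝ) :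
    ‖(ρ : ℂ) + (1 - ρ) * Complex.exp (2 * Real.pi * Complex.I * θ)‖ ^ (2 * ℓ)
      ≤ 1 - (1 - δ) * Real.sin (Real.pi * θ) ^ 2 := by
  set s := Real.sin (Real.pi * θ) ^ 2 with hs
  set a := 4 * ρ * (1 - ρ) with ha
  have hs0 : 0 ≤ s := sq_nonneg _
  have hs1 : s ≤ 1 := Real.sin_sq_le_one _
  have ha0 : 0 < a := by nlinarith
  have ha1 : a ≤ 1 := by nlinarith [sq_nonneg (2*ρ - 1)]
  -- abs squared
  have habs : ‖(ρ : ℂ) + (1 - ρ) * Complex.exp (2 * Real.pi * Complex.I * θ)‖ ^ 2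
      = 1 - a * s := by
    have h1 : (2 * (Real.pi:ℂ) * Complex.I * θ) = ((2*Real.pi*θ : ℝ) : ℂ) * Complex.I := by
      push_cast; ring
    rw [h1, Complex.exp_mul_I]
    rw [Complex.sq_norm, Complex.normSq_apply]
    simp only [Complex.add_re, Complex.add_im, Complex.mul_re, Complex.mul_im,
      Complex.ofReal_re, Complex.ofReal_im, Complex.one_re, Complex.one_im,
      Complex.sub_re, Complex.sub_im, Complex.cos_ofReal_re, Complex.cos_ofReal_im,
      Complex.sin_ofReal_re, Complex.sin_ofReal_im, Complex.I_re, Complex.I_im]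
    have hc : Real.cos (2 * Real.pi * θ) = 1 - 2 * Real.sin (Real.pi * θ) ^ 2 := by
      have h2 : 2 * Real.pi * θ = 2 * (Real.pi * θ) := by ring
      rw [h2, Real.cos_two_mul]
      nlinarith [Real.sin_sq_add_cos_sq (Real.pi * θ)]
    have hsc := Real.sin_sq_add_cos_sq (2 * Real.pi * θ)
    rw [hs, ha]
    nlinarith [hsc, hc]
  rw [pow_mul, habs]
  -- now (1 - a*s)^ℓ ≤ 1 - (1-δ) s
  have has0 : 0 ≤ 1 - a * s := by nlinarith
  have h2 : (1 - a * s) ^ ℓ ≤ Real.exp (-(a * s * ℓ)) := by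
    calc (1 - a * s) ^ ℓ ≤ Real.exp (-(a*s)) ^ ℓ := by
          apply pow_le_pow_left₀ has0
          linarith [Real.add_one_le_exp (-(a*s))]
      _ = Real.exp (-(a * s * ℓ)) := by
          rw [← Real.exp_nat_mul]; ring_nf
  have hconv : Real.exp (-(a * s * ℓ)) ≤ (1 - s) * 1 + s * Real.exp (-(a * ℓ)) := by
    have := convexOn_exp.2 (Set.mem_univ (0:ℝ)) (Set.mem_univ (-(a*ℓ))) (by linarith : (0:ℝ) ≤ 1 - s) hs0 (by ring)
    simpa [smul_eq_mul, Real.exp_zero, mul_comm, mul_left_comm, mul_assoc,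
      show (1-s) * 0 + s * (-(a*ℓ)) = -(a * s * ℓ) by ring] using this
  have hexp : Real.exp (-(a * ℓ)) ≤ δ := by
    have hρρ : 0 < ρ * (1 - ρ) := by nlinarith
    have hlog : Real.log (1/δ) < ℓ * (ρ * (1-ρ)) := by
      rw [div_lt_iff₀ hρρ] at hℓ; linarith
    have : Real.log (1/δ) ≤ a * ℓ := by
      have hℓ1 : (1:ℝ) ≤ ℓ := by exact_mod_cast hℓpos
      nlinarith
    calc Real.exp (-(a * ℓ)) ≤ Real.exp (-Real.log (1/δ)) := by
          apply Real.exp_le_exp.2; linarith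
      _ = δ := by
          rw [Real.log_div one_ne_zero (ne_of_gt hδ), Real.log_one]
          simp [Real.exp_log hδ]
  calc (1 - a * s) ^ ℓ ≤ (1 - s) * 1 + s * Real.exp (-(a * ℓ)) := le_trans h2 hconv
    _ ≤ 1 - (1 - δ) * s := by nlinarith
end

section
/- Let 0 < δ < 1 and let h be a positive integer. Then ∫₀¹ ∏_{j=0}^{h-1} (1 + δ - (1-δ)sin²(π·2ʲ·x)) dx = ((1+3δ)/2)^h. -/
open Real

private lemma sin_sq_periodic (c : ℕ) (x : ℝ) :
    Real.sin (Real.pi * 2 ^ c * (x + 1)) ^ 2 = Real.sin (Real.pi * 2 ^ c * x) ^ 2 := by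
  have harg : Real.pi * 2 ^ c * (x + 1) = Real.pi * 2 ^ c * x + (2 ^ c : ℕ) * Real.pi := by
    push_cast; ring
  rw [harg, Real.sin_add_nat_mul_pi, mul_pow, ← pow_mul, mul_comm (2^c) 2, pow_mul]
  norm_num

private lemma F_periodic (δ : ℝ) (n : ℕ) (x : ℝ) :
    (∏ j ∈ Finset.range n, (1 + δ - (1 - δ) * Real.sin (Real.pi * 2 ^ j * (x + 1)) ^ 2))
    = ∏ j ∈ Finset.range n, (1 + δ - (1 - δ) * Real.sin (Real.pi * 2 ^ j * x) ^ 2) := by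
  refine Finset.prod_congr rfl fun j _ => ?_
  rw [sin_sq_periodic]

private lemma F_cont (δ : ℝ) (n : ℕ) :
    Continuous (fun x : ℝ => ∏ j ∈ Finset.range n,
      (1 + δ - (1 - δ) * Real.sin (Real.pi * 2 ^ j * x) ^ 2)) := by
  apply continuous_finset_prod
  intro j _
  fun_prop

private lemma key (δ : ℝ) (h : ℕ) :
    ∫ x in (0:ℝ)..1, ∏ j ∈ Finset.range h,
        (1 + δ - (1 - δ) * Real.sin (Real.pi * 2 ^ j * x) ^ 2)
      = ((1 + 3 * δ) / 2) ^ h := by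
  induction h with
  | zero => simp
  | succ n ih =>
    set G : ℝ → ℝ := fun y =>
      (∏ j ∈ Finset.range n, (1 + δ - (1 - δ) * Real.sin (Real.pi * 2 ^ j * y) ^ 2))
        * (1 + δ - (1 - δ) * Real.sin (Real.pi * (y / 2)) ^ 2) with hG
    have hGcont : Continuous G := by
      apply Continuous.mul (F_cont δ n)
      fun_prop
    have h1 : ∀ x : ℝ, (∏ j ∈ Finset.range (n + 1),
        (1 + δ - (1 - δ) * Real.sin (Real.pi * 2 ^ j * x) ^ 2)) = G (2 * x) := by
      intro x
      rw [Finset.prod_range_succ', hG]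
      simp only
      congr 1
      · refine Finset.prod_congr rfl fun j _ => ?_
        congr 3
        ring
      · congr 3
        ring
    have h2 : (∫ x in (0:ℝ)..1, ∏ j ∈ Finset.range (n + 1),
        (1 + δ - (1 - δ) * Real.sin (Real.pi * 2 ^ j * x) ^ 2))
        = ∫ x in (0:ℝ)..1, G (2 * x) := by
      exact intervalIntegral.integral_congr (fun x _ => h1 x)
    rw [h2, intervalIntegral.integral_comp_mul_left G (two_ne_zero)]
    norm_num
    have hsplit : (∫ y in (0:ℝ)..2, G y)
        = (∫ y in (0:ℝ)..1, G y) + ∫ y in (1:ℝ)..2, G y := by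
      rw [intervalIntegral.integral_add_adjacent_intervals] <;>
        exact hGcont.intervalIntegrable _ _
    have hshift : (∫ y in (1:ℝ)..2, G y) = ∫ y in (0:ℝ)..1, G (y + 1) := by
      rw [intervalIntegral.integral_comp_add_right]
      norm_num
    have hi2 : IntervalIntegrable (fun y : ℝ => G (y + 1)) MeasureTheory.volume 0 1 := by
      have : Continuous (fun y : ℝ => G (y + 1)) :=
        hGcont.comp (continuous_id.add continuous_const)
      exact this.intervalIntegrable _ _
    have hsum : (∫ y in (0:ℝ)..1, G y) + (∫ y in (0:ℝ)..1, G (y + 1))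
        = ∫ y in (0:ℝ)..1, (G y + G (y + 1)) :=
      (intervalIntegral.integral_add (hGcont.intervalIntegrable _ _) hi2).symm
    have hpt : ∀ y : ℝ, G y + G (y + 1) = (1 + 3 * δ) *
        ∏ j ∈ Finset.range n, (1 + δ - (1 - δ) * Real.sin (Real.pi * 2 ^ j * y) ^ 2) := by
      intro y
      rw [hG]
      simp only
      rw [F_periodic]
      have harg : Real.pi * ((y + 1) / 2) = Real.pi * (y / 2) + Real.pi / 2 := by ring
      have hcos : Real.sin (Real.pi * ((y + 1) / 2)) ^ 2
          = Real.cos (Real.pi * (y / 2)) ^ 2 := by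
        rw [harg, Real.sin_add_pi_div_two]
      rw [hcos]
      have := Real.sin_sq_add_cos_sq (Real.pi * (y / 2))
      linear_combination (δ - 1) *
        (∏ j ∈ Finset.range n, (1 + δ - (1 - δ) * Real.sin (Real.pi * 2 ^ j * y) ^ 2)) * this
    have hint : (∫ y in (0:ℝ)..1, (G y + G (y + 1)))
        = (1 + 3 * δ) * ((1 + 3 * δ) / 2) ^ n := by
      rw [intervalIntegral.integral_congr (fun y _ => hpt y),
        intervalIntegral.integral_const_mul, ih]
    rw [hsplit, hshift, hsum, hint]
    ring

theorem stmt_4 (δ : ℝ) (hδ : 0 < δ) (hδ1 : δ < 1) (h : ℕ) (hh : 0 < h) :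
    ∫ x in (0:ℝ)..1, ∏ j ∈ Finset.range h,
        (1 + δ - (1 - δ) * Real.sin (Real.pi * 2 ^ j * x) ^ 2)
      = ((1 + 3 * δ) / 2) ^ h := key δ h
end

section
/- Let q ≥ 3 be an odd integer and λ an integer with λ ≢ 0 (mod q). Then there exists an integer j with 0 ≤ j ≤ log₂(q) such that the distance from λ·2ʲ/q to the nearest integer is at least 1/4 (in particular sin²(π λ 2ʲ / q) ≥ 1/2). -/
open Real

theorem stmt_7 (q : ℕ) (hq : 3 ≤ q) (hodd : Odd q) (l : ℤ) (hl : ¬ ((q : ℤ) ∣ l)) :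
    ∃ j : ℕ, (j : ℝ) ≤ Real.logb 2 q ∧
      (∀ n : ℤ, (1 / 4 : ℝ) ≤ |(l : ℝ) * 2 ^ j / q - n|) ∧
      (1 / 2 : ℝ) ≤ Real.sin (Real.pi * l * 2 ^ j / q) ^ 2 := by
  have hq0 : (0:ℤ) < q := by exact_mod_cast lt_of_lt_of_le (by norm_num) hq
  set r : ℤ := l % q with hr
  have hrne : r ≠ 0 := fun h => hl (Int.dvd_of_emod_eq_zero h)
  have hr0 : 0 < r := lt_of_le_of_ne (Int.emod_nonneg l hq0.ne') (Ne.symm hrne)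
  have hrq : r < q := Int.emod_lt_of_pos l hq0
  set d : ℤ := min r (q - r) with hd
  have hd1 : 1 ≤ d := le_min hr0 (by omega)
  have h2dq : 2 * d ≤ q := by
    rcases min_cases r ((q:ℤ) - r) with ⟨h1, h2⟩ | ⟨h1, h2⟩ <;> omega
  have h2d : 2 * d < q := by
    rcases eq_or_lt_of_le h2dq with h | h
    · exfalso
      have : Even (q:ℤ) := ⟨d, by linarith⟩
      rw [Int.even_coe_nat] at this
      exact (Nat.not_even_iff_odd.mpr hodd) this
    · exact h
  -- sign
  obtain ⟨ε, hε, hdvd⟩ : ∃ ε : ℤ, (ε = 1 ∨ ε = -1) ∧ (q:ℤ) ∣ l - ε * d := by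
    rcases min_cases r ((q:ℤ) - r) with ⟨h1, _⟩ | ⟨h1, _⟩
    · refine ⟨1, Or.inl rfl, ?_⟩
      rw [hd, h1, one_mul]
      exact ⟨l / q, by rw [hr]; linarith [Int.emod_add_mul_ediv l q]⟩
    · refine ⟨-1, Or.inr rfl, ?_⟩
      rw [hd, h1]
      exact ⟨l / q + 1, by rw [hr]; push_cast; linarith [Int.emod_add_mul_ediv l q]⟩
  -- minimal j
  have hP : ∃ j : ℕ, (q:ℤ) ≤ 4 * 2 ^ j * d := by
    refine ⟨q, ?_⟩
    have h1 : (q:ℤ) < 2 ^ q := by exact_mod_cast Nat.lt_two_pow_self (n := q)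
    have h2 : (1:ℤ) ≤ 2 ^ q := one_le_pow₀ (by norm_num)
    nlinarith
  classical
  set j := Nat.find hP with hjdef
  have hj := Nat.find_spec hP
  have hmin : ∀ i, i < j → ¬ ((q:ℤ) ≤ 4 * 2 ^ i * d) := fun i hi => Nat.find_min hP hi
  set e : ℤ := 2 ^ j * d with he
  have he1 : (q:ℤ) ≤ 4 * e := by rw [he]; linarith [hj]
  have he2 : 2 * e < q := by
    rcases j with _ | i
    · simpa [he] using h2d
    · have := hmin i (Nat.lt_succ_self i)
      push_neg at this
      rw [he, pow_succ]
      nlinarith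
  have hee : 2 ^ j ≤ e := by
    rw [he]; nlinarith [pow_pos (by norm_num : (0:ℤ) < 2) j]
  have heq : e < q := by linarith [hee, pow_pos (by norm_num : (0:ℤ) < 2) j]
  obtain ⟨k, hk⟩ : ∃ k : ℤ, l * 2 ^ j - ε * e = q * k := by
    obtain ⟨c, hc⟩ := hdvd
    exact ⟨c * 2 ^ j, by rw [he]; ring_nf; nlinarith [hc]⟩
  have hqR : (0:ℝ) < q := by exact_mod_cast hq0
  have hx : (l : ℝ) * 2 ^ j / q = k + ε * e / q := by
    have : (l:ℝ) * 2 ^ j - ε * e = q * k := by exact_mod_cast hk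
    field_simp
    linarith
  have hy1 : (1/4 : ℝ) ≤ (e:ℝ) / q := by
    rw [le_div_iff₀ hqR]
    have : (q:ℝ) ≤ 4 * e := by exact_mod_cast he1
    linarith
  have hy2 : (e:ℝ) / q ≤ 1/2 := by
    rw [div_le_iff₀ hqR]
    have : 2 * (e:ℝ) < q := by exact_mod_cast he2
    linarith
  have habs : |(ε:ℝ) * e / q| = (e:ℝ) / q := by
    rcases hε with h | h <;> subst h <;>
      simp [abs_div, abs_of_nonneg (by positivity : (0:ℝ) ≤ (e:ℝ)), abs_of_pos hqR] <;> ring_nf <;>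
      simp [abs_of_nonneg, le_of_lt hqR]
  refine ⟨j, ?_, ?_, ?_⟩
  · -- logb bound
    have h2jq : (2:ℝ) ^ j ≤ q := by
      have : (2:ℤ) ^ j < q := lt_of_le_of_lt hee heq
      exact_mod_cast this.le
    have hmono := Real.logb_le_logb_of_le (b := 2) (by norm_num) (by positivity : (0:ℝ) < (2:ℝ)^j) h2jq
    have hlog : Real.logb 2 ((2:ℝ)^j) = j := by
      rw [Real.logb, Real.log_pow, mul_div_assoc, div_self (ne_of_gt (Real.log_pos (by norm_num))), mul_one]
    linarith [hmono, hlog.symm.le, hlog.le]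
  · intro n
    rw [hx]
    set y : ℝ := (ε:ℝ) * e / q with hyy
    have hy1' : (1/4:ℝ) ≤ |y| := by rw [hyy, habs]; exact hy1
    have hy2' : |y| ≤ 1/2 := by rw [hyy, habs]; exact hy2
    rcases eq_or_ne (k - n) 0 with h | h
    · have hkn : (k:ℝ) = n := by
        have : (k:ℤ) = n := by omega
        exact_mod_cast this
      rw [show (k:ℝ) + y - n = y by rw [hkn]; ring]
      linarith
    · have h1 : (1:ℝ) ≤ |((k - n : ℤ):ℝ)| := by
        rw [← Int.cast_abs]
        exact_mod_cast Int.one_le_abs (by omega)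
      have heq2 : (k:ℝ) + y - n = ((k - n : ℤ):ℝ) + y := by push_cast; ring
      rw [heq2]
      have := abs_add_le (((k - n : ℤ):ℝ) + y) (-y)
      simp only [add_neg_cancel_right, abs_neg] at this
      linarith
  · -- sin part
    have harg : Real.pi * l * 2 ^ j / q = π * k + π * (ε * e / q) := by
      rw [show Real.pi * (l:ℝ) * 2 ^ j / q = π * ((l:ℝ) * 2 ^ j / q) by ring, hx]
      ring
    rw [harg]
    have hsq : Real.sin (π * k + π * ((ε:ℝ) * e / q)) ^ 2
        = 1/2 - Real.cos (2 * (π * k + π * ((ε:ℝ) * e / q))) / 2 := by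
      rw [Real.sin_sq]
      rw [Real.cos_sq]
      ring
    rw [hsq]
    have hcos : Real.cos (2 * (π * k + π * ((ε:ℝ) * e / q))) = Real.cos (2 * π * ((e:ℝ)/q)) := by
      have : 2 * (π * k + π * ((ε:ℝ) * e / q)) = ε * (2 * π * ((e:ℝ)/q)) + (k:ℝ) * (2 * π) := by
        ring
      rw [this, Real.cos_add_int_mul_two_pi]
      rcases hε with h | h <;> subst h <;> push_cast <;> simp [Real.cos_neg]
    rw [hcos]
    have hc : Real.cos (2 * π * ((e:ℝ)/q)) ≤ 0 := by
      apply Real.cos_nonpos_of_pi_div_two_le_of_le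
      · nlinarith [Real.pi_pos]
      · nlinarith [Real.pi_pos]
    linarith
end

section
/- Let q ≥ 3 be odd, λ ≢ 0 (mod q), 1/2 < ρ < 1, and m ≥ 1. Then ∏_{j=0}^{m-1} |ρ + (1-ρ)e^{2πi λ 2ʲ / q}| ≤ (1 - ρ(1-ρ)/q²)^m. -/
open Real Complex

lemma aux_sin_lb (q : ℕ) (hq : 3 ≤ q) (s : ℝ) (h1 : 1 ≤ s) (h2 : 2 * s ≤ q) :
    1 / q ≤ Real.sin (Real.pi * s / q) := by
  have hqpos : (0:ℝ) < q := by positivity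
  have hx0 : 0 ≤ Real.pi * s / q := by positivity
  have hx1 : Real.pi * s / q ≤ Real.pi / 2 := by
    rw [div_le_div_iff₀ hqpos (by norm_num)]
    nlinarith [Real.pi_pos]
  have := Real.mul_le_sin hx0 hx1
  have h2q : 2 / Real.pi * (Real.pi * s / q) = 2 * s / q := by
    field_simp
  rw [h2q] at this
  refine le_trans ?_ this
  rw [div_le_div_iff₀ hqpos hqpos]
  nlinarith

lemma sin_sq_lb (q : ℕ) (hq : 3 ≤ q) (k : ℤ) (hk : ¬ ((q : ℤ) ∣ k)) :
    1 / (q:ℝ) ^ 2 ≤ Real.sin (Real.pi * k / q) ^ 2 := by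
  have hq0 : (0:ℤ) < q := by positivity
  set r : ℤ := k % q with hr
  have hr0 : 0 ≤ r := Int.emod_nonneg k (by positivity)
  have hrq : r < q := Int.emod_lt_of_pos k hq0
  have hrne : r ≠ 0 := by
    intro h
    exact hk (Int.dvd_of_emod_eq_zero h)
  have hr1 : 1 ≤ r := lt_of_le_of_ne hr0 (Ne.symm hrne)
  set t : ℤ := k / q with ht
  have hkz : k = q * t + r := by rw [ht, hr]; exact (Int.mul_ediv_add_emod k q).symm
  have hkqt : (k:ℝ) = q * t + r := by exact_mod_cast congrArg (Int.cast : ℤ → ℝ) hkz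
  have hqR : (0:ℝ) < q := by positivity
  have harg : Real.pi * k / q = Real.pi * r / q + t * Real.pi := by
    rw [hkqt]; field_simp; ring
  have hsq : Real.sin (Real.pi * k / q) ^ 2 = Real.sin (Real.pi * r / q) ^ 2 := by
    rw [harg, Real.sin_add_int_mul_pi, mul_pow]
    have : ((-1:ℝ) ^ t) ^ 2 = 1 := by
      rw [sq, ← zpow_add₀ (by norm_num : (-1:ℝ) ≠ 0), show t + t = 2 * t by ring,
        zpow_mul]
      norm_num
    rw [this, one_mul]
  rw [hsq]
  -- now bound sin (π r / q)^2 from below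
  have key : 1 / (q:ℝ) ≤ Real.sin (Real.pi * r / q) := by
    rcases le_or_gt (2 * r) q with h | h
    · exact aux_sin_lb q hq r (by exact_mod_cast hr1) (by exact_mod_cast h)
    · have hs : Real.sin (Real.pi * r / q) = Real.sin (Real.pi * ((q:ℝ) - r) / q) := by
        rw [← Real.sin_pi_sub]
        congr 1
        field_simp
      rw [hs]
      have h1 : (1:ℝ) ≤ (q:ℝ) - r := by
        have : r ≤ q - 1 := by omega
        have : (r:ℝ) ≤ (q:ℝ) - 1 := by exact_mod_cast this
        linarith
      have h2 : 2 * ((q:ℝ) - r) ≤ q := by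
        have : q + 1 ≤ 2 * r := by omega
        have : (q:ℝ) + 1 ≤ 2 * r := by exact_mod_cast this
        linarith
      exact aux_sin_lb q hq _ h1 h2
  have hpos : (0:ℝ) < 1 / q := by positivity
  calc 1 / (q:ℝ) ^ 2 = (1 / q) ^ 2 := by ring
    _ ≤ Real.sin (Real.pi * r / q) ^ 2 := by
        apply pow_le_pow_left₀ (le_of_lt hpos) key

lemma factor_le (q : ℕ) (hq : 3 ≤ q) (k : ℤ) (hk : ¬ ((q : ℤ) ∣ k))
    (ρ : ℝ) (hρ : 1 / 2 < ρ) (hρ1 : ρ < 1) :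
    ‖(ρ : ℂ) + (1 - ρ) * Complex.exp (2 * Real.pi * Complex.I * k / q)‖
      ≤ 1 - ρ * (1 - ρ) / q ^ 2 := by
  have hqR : (0:ℝ) < q := by positivity
  set θ : ℝ := 2 * Real.pi * k / q with hθ
  have harg : (2 * Real.pi * Complex.I * k / q : ℂ) = (θ : ℂ) * Complex.I := by
    rw [hθ]; push_cast; ring
  have hz : ((ρ : ℂ) + (1 - ρ) * Complex.exp (2 * Real.pi * Complex.I * k / q))
      = ((ρ + (1 - ρ) * Real.cos θ : ℝ) : ℂ) + ((1 - ρ) * Real.sin θ : ℝ) * Complex.I := by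
    rw [harg, Complex.exp_mul_I]
    push_cast
    ring
  rw [hz, Complex.norm_add_mul_I]
  have hsin2 : 1 / (q:ℝ) ^ 2 ≤ Real.sin (θ / 2) ^ 2 := by
    have : θ / 2 = Real.pi * k / q := by rw [hθ]; ring
    rw [this]
    exact sin_sq_lb q hq k hk
  have hcos : Real.cos θ = 1 - 2 * Real.sin (θ / 2) ^ 2 := by
    have := Real.sin_sq_eq_half_sub (θ / 2)
    have h2 : 2 * (θ / 2) = θ := by ring
    rw [h2] at this
    linarith
  have hq3 : (3:ℝ) ≤ q := by exact_mod_cast hq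
  have hq2 : (9:ℝ) ≤ (q:ℝ) ^ 2 := by nlinarith
  have hB : (0:ℝ) ≤ 1 - ρ * (1 - ρ) / q ^ 2 := by
    rw [sub_nonneg, div_le_one (by positivity)]
    nlinarith
  have hA : (ρ + (1 - ρ) * Real.cos θ) ^ 2 + ((1 - ρ) * Real.sin θ) ^ 2
      ≤ (1 - ρ * (1 - ρ) / q ^ 2) ^ 2 := by
    have hpyth := Real.sin_sq_add_cos_sq θ
    have hρpos : 0 < ρ * (1 - ρ) := by nlinarith
    have hA1 : (ρ + (1 - ρ) * Real.cos θ) ^ 2 + ((1 - ρ) * Real.sin θ) ^ 2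
        = 1 - 4 * (ρ * (1 - ρ)) * Real.sin (θ / 2) ^ 2 := by
      rw [hcos] at hpyth ⊢
      linear_combination (1 - ρ) ^ 2 * hpyth
    rw [hA1]
    have h1 : 4 * (ρ * (1 - ρ)) * (1 / (q:ℝ) ^ 2) ≤ 4 * (ρ * (1 - ρ)) * Real.sin (θ / 2) ^ 2 := by
      apply mul_le_mul_of_nonneg_left hsin2 (by positivity)
    have hq2pos : (0:ℝ) < (q:ℝ) ^ 2 := by positivity
    have ha : 0 < ρ * (1 - ρ) / q ^ 2 := by positivity
    have heq : 4 * (ρ * (1 - ρ)) * (1 / (q:ℝ) ^ 2) = 4 * (ρ * (1 - ρ) / q ^ 2) := by ring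
    nlinarith [h1, heq, sq_nonneg (ρ * (1 - ρ) / q ^ 2), ha.le]
  calc Real.sqrt ((ρ + (1 - ρ) * Real.cos θ) ^ 2 + ((1 - ρ) * Real.sin θ) ^ 2)
      ≤ Real.sqrt ((1 - ρ * (1 - ρ) / q ^ 2) ^ 2) := Real.sqrt_le_sqrt hA
    _ = 1 - ρ * (1 - ρ) / q ^ 2 := Real.sqrt_sq hB

theorem stmt_8 (q : ℕ) (hq : 3 ≤ q) (hodd : Odd q) (l : ℤ) (hl : ¬ ((q : ℤ) ∣ l))
    (ρ : ℝ) (hρ : 1 / 2 < ρ) (hρ1 : ρ < 1) (m : ℕ) (hm : 1 ≤ m) :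
    ∏ j ∈ Finset.range m,
        ‖(ρ : ℂ) + (1 - ρ) * Complex.exp (2 * Real.pi * Complex.I * l * 2 ^ j / q)‖
      ≤ (1 - ρ * (1 - ρ) / q ^ 2) ^ m := by
  have hcop : IsCoprime ((q:ℤ)) 2 := by
    obtain ⟨n, hn⟩ := hodd
    exact ⟨1, -(n:ℤ), by push_cast [hn]; ring⟩
  have hstep : ∀ j ∈ Finset.range m,
      ‖(ρ : ℂ) + (1 - ρ) * Complex.exp (2 * Real.pi * Complex.I * l * 2 ^ j / q)‖
        ≤ 1 - ρ * (1 - ρ) / q ^ 2 := by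
    intro j _
    have hk : ¬ ((q : ℤ) ∣ l * 2 ^ j) := by
      intro hdvd
      exact hl (hcop.pow_right.dvd_of_dvd_mul_right hdvd)
    have harg : (2 * Real.pi * Complex.I * l * 2 ^ j / q : ℂ)
        = 2 * Real.pi * Complex.I * ((l * 2 ^ j : ℤ) : ℂ) / q := by
      push_cast; ring
    rw [harg]
    exact factor_le q hq (l * 2 ^ j) hk ρ hρ hρ1
  calc ∏ j ∈ Finset.range m,
        ‖(ρ : ℂ) + (1 - ρ) * Complex.exp (2 * Real.pi * Complex.I * l * 2 ^ j / q)‖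
      ≤ ∏ j ∈ Finset.range m, (1 - ρ * (1 - ρ) / q ^ 2) := by
        apply Finset.prod_le_prod (fun i _ => norm_nonneg _) hstep
    _ = (1 - ρ * (1 - ρ) / q ^ 2) ^ m := by
        rw [Finset.prod_const, Finset.card_range]
end

section
/- Let t ∈ (1/2, 1) satisfy t^t(1-t)^{1-t} < 1/√3. Then there exist a real q > 1 and a constant c > 0 such that, with p the conjugate exponent (1/p + 1/q = 1), √3^{1/p} · (t^q + (1-t)^q)^{1/q} ≤ 2^{-c}. -/
lemma exp_le_aux (x : ℝ) (hx : x ≤ 0) : Real.exp x ≤ 1 + x + x ^ 2 := by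
  have h1 : -x + 1 ≤ Real.exp (-x) := Real.add_one_le_exp (-x)
  have h2 : Real.exp x * Real.exp (-x) = 1 := by
    rw [← Real.exp_add]; simp
  have hpos2 : (0:ℝ) < Real.exp (-x) := Real.exp_pos _
  nlinarith [mul_le_mul_of_nonneg_left h1 (by nlinarith : (0:ℝ) ≤ 1 + x + x ^ 2),
    Real.exp_pos x, sq_nonneg x, mul_nonneg (mul_nonneg (neg_nonneg.mpr hx) (neg_nonneg.mpr hx)) (neg_nonneg.mpr hx)]

theorem stmt_14 (t : ℝ) (ht : t ∈ Set.Ioo (1/2 : ℝ) 1)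
    (hlt : t ^ t * (1 - t) ^ (1 - t) < 1 / Real.sqrt 3) :
    ∃ q c : ℝ, 1 < q ∧ 0 < c ∧
      ∀ p : ℝ, 1 / p + 1 / q = 1 →
        Real.sqrt 3 ^ (1 / p) * (t ^ q + (1 - t) ^ q) ^ (1 / q) ≤ 2 ^ (-c) := by
  obtain ⟨ht1, ht2⟩ := ht
  have htpos : (0:ℝ) < t := by linarith
  have h1tpos : (0:ℝ) < 1 - t := by linarith
  have hlt0 : Real.log t < 0 := Real.log_neg htpos ht2
  have hl1t0 : Real.log (1 - t) < 0 := Real.log_neg h1tpos (by linarith)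
  obtain ⟨E, hE⟩ : ∃ E : ℝ, E = t * Real.log t + (1 - t) * Real.log (1 - t) := ⟨_, rfl⟩
  obtain ⟨A, hA⟩ : ∃ A : ℝ, A = Real.log (Real.sqrt 3) + E := ⟨_, rfl⟩
  have h3pos : (0:ℝ) < Real.sqrt 3 := Real.sqrt_pos.mpr (by norm_num)
  have hAneg : A < 0 := by
    have hlhs : (0:ℝ) < t ^ t * (1 - t) ^ (1 - t) := by positivity
    have := Real.log_lt_log hlhs hlt
    rw [Real.log_mul (by positivity) (by positivity), Real.log_rpow htpos,
      Real.log_rpow h1tpos, Real.log_div one_ne_zero (ne_of_gt h3pos), Real.log_one] at this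
    rw [hA, hE]; linarith
  obtain ⟨C, hC⟩ : ∃ C : ℝ, C = t * (Real.log t) ^ 2 + (1 - t) * (Real.log (1 - t)) ^ 2 := ⟨_, rfl⟩
  have hCnn : 0 ≤ C := by rw [hC]; positivity
  obtain ⟨s, hs⟩ : ∃ s : ℝ, s = -A / (2 * C + 2) := ⟨_, rfl⟩
  have hspos : 0 < s := by rw [hs]; exact div_pos (by linarith) (by linarith)
  have hsC : s * C ≤ -A / 2 := by
    rw [hs, div_mul_eq_mul_div, div_le_div_iff₀ (by linarith) (by norm_num)]
    nlinarith
  obtain ⟨q, hqdef⟩ : ∃ q : ℝ, q = 1 + s := ⟨_, rfl⟩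
  have hq1 : 1 < q := by rw [hqdef]; linarith
  have hqpos : 0 < q := by linarith
  obtain ⟨c, hc⟩ : ∃ c : ℝ, c = s / q * (-A / 2) / Real.log 2 := ⟨_, rfl⟩
  have hlog2 : (0:ℝ) < Real.log 2 := Real.log_pos (by norm_num)
  have hcpos : 0 < c := by
    rw [hc]; exact div_pos (mul_pos (div_pos hspos hqpos) (by linarith)) hlog2
  refine ⟨q, c, hq1, hcpos, ?_⟩
  intro p hp
  have hpinv : 1 / p = s / q := by
    have h1 : 1 / p = 1 - 1 / q := by linarith
    rw [h1, hqdef]; field_simp; ring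
  have hexpand : ∀ u : ℝ, 0 < u → u ^ q = u * Real.exp (s * Real.log u) := by
    intro u hu
    rw [hqdef, Real.rpow_add hu, Real.rpow_one, Real.rpow_def_of_pos hu, mul_comm s]
  have hb1 := exp_le_aux (s * Real.log t) (by nlinarith)
  have hb2 := exp_le_aux (s * Real.log (1 - t)) (by nlinarith)
  have hsum : t ^ q + (1 - t) ^ q ≤ 1 + s * E + s ^ 2 * C := by
    rw [hexpand t htpos, hexpand (1 - t) h1tpos, hE, hC]
    nlinarith [mul_le_mul_of_nonneg_left hb1 htpos.le,
      mul_le_mul_of_nonneg_left hb2 h1tpos.le]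
  have hsum2 : t ^ q + (1 - t) ^ q ≤ Real.exp (s * E + s ^ 2 * C) := by
    refine hsum.trans ?_
    have := Real.add_one_le_exp (s * E + s ^ 2 * C)
    linarith
  have hsumpos : 0 < t ^ q + (1 - t) ^ q := by positivity
  have hstep : (t ^ q + (1 - t) ^ q) ^ (1 / q) ≤ Real.exp ((s * E + s ^ 2 * C) / q) := by
    have h := Real.rpow_le_rpow hsumpos.le hsum2 (by positivity : (0:ℝ) ≤ 1 / q)
    rwa [Real.rpow_def_of_pos (Real.exp_pos _), Real.log_exp, mul_one_div] at h
  have hsqrt : Real.sqrt 3 ^ (1 / p) = Real.exp (s / q * Real.log (Real.sqrt 3)) := by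
    rw [hpinv, Real.rpow_def_of_pos h3pos, mul_comm]
  calc Real.sqrt 3 ^ (1 / p) * (t ^ q + (1 - t) ^ q) ^ (1 / q)
      ≤ Real.exp (s / q * Real.log (Real.sqrt 3)) * Real.exp ((s * E + s ^ 2 * C) / q) := by
        rw [hsqrt]
        exact mul_le_mul_of_nonneg_left hstep (Real.exp_pos _).le
    _ = Real.exp (s / q * (Real.log (Real.sqrt 3) + E + s * C)) := by
        rw [← Real.exp_add]; congr 1
        field_simp; ring
    _ ≤ Real.exp (s / q * (A / 2)) := by
        apply Real.exp_le_exp.mpr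
        apply mul_le_mul_of_nonneg_left _ (by positivity : (0:ℝ) ≤ s / q)
        rw [hA]; linarith
    _ = 2 ^ (-c) := by
        rw [Real.rpow_def_of_pos (by norm_num : (0:ℝ) < 2)]
        congr 1
        rw [hc, mul_neg, mul_comm (Real.log 2), div_mul_cancel₀ _ hlog2.ne']
        ring
end

section
/- Let N = 2^m, 0 < ρ < 1, and μ(n) = ρ^{m-ℓ(n)}(1-ρ)^{ℓ(n)} with ℓ(n) the binary digit sum of n ∈ {0,...,N-1}. Let q ≥ 1 be an integer. Then ∑_{n < N, q | n} μ(n) = 1/q + (1/q)∑_{λ=1}^{q-1} ∏_{j=0}^{m-1} (ρ + (1-ρ) e^{2πi λ 2ʲ / q}). -/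
open Finset

private lemma sdigit_le {m k : ℕ} (hk : k < 2 ^ m) : (Nat.digits 2 k).sum ≤ m := by
  have hlen : (Nat.digits 2 k).length ≤ m := by
    rcases Nat.eq_zero_or_pos k with rfl | hk0
    · simp
    · rw [Nat.digits_len 2 k (by norm_num) hk0.ne']
      exact Nat.log_lt_of_lt_pow hk0.ne' hk
  calc (Nat.digits 2 k).sum ≤ (Nat.digits 2 k).length * 1 :=
        List.sum_le_card_nsmul _ 1 (fun x hx => Nat.lt_succ_iff.mp (Nat.digits_lt_base (by norm_num) hx))
    _ ≤ m := by omega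

private lemma sdigit_add_pow {m k : ℕ} (hk : k < 2 ^ m) :
    (Nat.digits 2 (k + 2 ^ m)).sum = (Nat.digits 2 k).sum + 1 := by
  have hlen : (Nat.digits 2 k).length ≤ m := by
    rcases Nat.eq_zero_or_pos k with rfl | hk0
    · simp
    · rw [Nat.digits_len 2 k (by norm_num) hk0.ne']
      exact Nat.log_lt_of_lt_pow hk0.ne' hk
  have h := Nat.digits_append_zeroes_append_digits (b := 2) (k := m - (Nat.digits 2 k).length)
      (m := 1) (n := k) (by norm_num) one_pos
  rw [Nat.add_sub_cancel' hlen] at h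
  have := congrArg List.sum h
  simpa using this.symm

private lemma key_sum (m : ℕ) (ρ z : ℂ) :
    ∑ n ∈ Finset.range (2 ^ m),
        (ρ ^ (m - (Nat.digits 2 n).sum) * (1 - ρ) ^ (Nat.digits 2 n).sum) * z ^ n
      = ∏ j ∈ Finset.range m, (ρ + (1 - ρ) * z ^ (2 ^ j)) := by
  induction m with
  | zero => simp
  | succ m ih =>
    have hsplit : Finset.range (2 ^ (m + 1)) =
        Finset.range (2 ^ m) ∪ (Finset.range (2 ^ m)).image (fun k => k + 2 ^ m) := by
      ext n
      simp only [Finset.mem_union, Finset.mem_image, Finset.mem_range]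
      constructor
      · intro hn
        rcases lt_or_ge n (2 ^ m) with h | h
        · exact Or.inl h
        · exact Or.inr ⟨n - 2 ^ m, by rw [pow_succ] at hn; omega, by omega⟩
      · rintro (h | ⟨k, hk, rfl⟩) <;> [skip; skip] <;>
          simp_all [pow_succ] <;> omega
    rw [hsplit, Finset.sum_union, Finset.sum_image]
    · have h1 : ∑ n ∈ Finset.range (2 ^ m),
          (ρ ^ (m + 1 - (Nat.digits 2 n).sum) * (1 - ρ) ^ (Nat.digits 2 n).sum) * z ^ n
          = ρ * ∑ n ∈ Finset.range (2 ^ m),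
              (ρ ^ (m - (Nat.digits 2 n).sum) * (1 - ρ) ^ (Nat.digits 2 n).sum) * z ^ n := by
        rw [Finset.mul_sum]
        refine Finset.sum_congr rfl fun n hn => ?_
        have := sdigit_le (Finset.mem_range.mp hn)
        have : m + 1 - (Nat.digits 2 n).sum = (m - (Nat.digits 2 n).sum) + 1 := by omega
        rw [this, pow_succ]; ring
      have h2 : ∑ k ∈ Finset.range (2 ^ m),
          (ρ ^ (m + 1 - (Nat.digits 2 (k + 2 ^ m)).sum) *
            (1 - ρ) ^ (Nat.digits 2 (k + 2 ^ m)).sum) * z ^ (k + 2 ^ m)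
          = (1 - ρ) * z ^ (2 ^ m) * ∑ n ∈ Finset.range (2 ^ m),
              (ρ ^ (m - (Nat.digits 2 n).sum) * (1 - ρ) ^ (Nat.digits 2 n).sum) * z ^ n := by
        rw [Finset.mul_sum]
        refine Finset.sum_congr rfl fun k hk => ?_
        have hk' := Finset.mem_range.mp hk
        rw [sdigit_add_pow hk']
        have : m + 1 - ((Nat.digits 2 k).sum + 1) = m - (Nat.digits 2 k).sum := by omega
        rw [this, pow_succ, pow_add]; ring
      rw [h1, h2, ih, Finset.prod_range_succ]; ring
    · intro a _ b _ h; exact Nat.add_right_cancel h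
    · rw [Finset.disjoint_left]
      intro a ha hb
      simp only [Finset.mem_image, Finset.mem_range] at ha hb
      obtain ⟨k, hk, rfl⟩ := hb
      omega

private lemma orth (q : ℕ) (hq : 1 ≤ q) (n : ℕ) :
    ∑ l ∈ Finset.range q, Complex.exp (2 * Real.pi * Complex.I * l * n / q)
      = if q ∣ n then (q : ℂ) else 0 := by
  have hq0 : (q : ℂ) ≠ 0 := Nat.cast_ne_zero.mpr (by omega)
  have hz : ∀ l : ℕ, Complex.exp (2 * Real.pi * Complex.I * l * n / q)
      = (Complex.exp (2 * Real.pi * Complex.I * n / q)) ^ l := by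
    intro l
    rw [← Complex.exp_nat_mul]
    ring_nf
  simp only [hz]
  set ζ := Complex.exp (2 * Real.pi * Complex.I * n / q) with hζ
  by_cases hdvd : q ∣ n
  · have : ζ = 1 := by
      obtain ⟨c, rfl⟩ := hdvd
      rw [hζ, Complex.exp_eq_one_iff]
      exact ⟨c, by push_cast; field_simp⟩
    simp [this, hdvd]
  · have hζ1 : ζ ≠ 1 := by
      rw [hζ, Ne, Complex.exp_eq_one_iff]
      rintro ⟨k, hk⟩
      have h2πi : (2 : ℂ) * Real.pi * Complex.I ≠ 0 := by
        simp [Real.pi_ne_zero, Complex.I_ne_zero]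
      rw [div_eq_iff hq0] at hk
      have hnc : (n : ℂ) = k * q :=
        mul_left_cancel₀ h2πi (by linear_combination hk)
      have hni : (n : ℤ) = k * q := by exact_mod_cast hnc
      exact hdvd (Int.natCast_dvd_natCast.mp ⟨k, by linear_combination hni⟩)
    have hζq : ζ ^ q = 1 := by
      rw [hζ, ← Complex.exp_nat_mul, Complex.exp_eq_one_iff]
      exact ⟨n, by push_cast; field_simp⟩
    rw [if_neg hdvd, geom_sum_eq hζ1, hζq]
    simp

theorem stmt_16 (m : ℕ) (hm : 0 < m) (ρ : ℝ) (hρ : 0 < ρ) (hρ1 : ρ < 1)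
    (q : ℕ) (hq : 1 ≤ q) :
    ∑ n ∈ (Finset.range (2 ^ m)).filter (fun n => q ∣ n),
        ((ρ ^ (m - (Nat.digits 2 n).sum) * (1 - ρ) ^ (Nat.digits 2 n).sum : ℝ) : ℂ)
      = 1 / q + (1 / q) * ∑ l ∈ Finset.Ico 1 q, ∏ j ∈ Finset.range m,
          ((ρ : ℂ) + (1 - ρ) * Complex.exp (2 * Real.pi * Complex.I * l * 2 ^ j / q)) := by
  have hq0 : (q : ℂ) ≠ 0 := Nat.cast_ne_zero.mpr (by omega)
  -- rewrite filtered sum using indicator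
  have hfilter : ∑ n ∈ (Finset.range (2 ^ m)).filter (fun n => q ∣ n),
        ((ρ ^ (m - (Nat.digits 2 n).sum) * (1 - ρ) ^ (Nat.digits 2 n).sum : ℝ) : ℂ)
      = ∑ n ∈ Finset.range (2 ^ m),
          ((ρ : ℂ) ^ (m - (Nat.digits 2 n).sum) * (1 - (ρ : ℂ)) ^ (Nat.digits 2 n).sum) *
            ((1 / q) * ∑ l ∈ Finset.range q, Complex.exp (2 * Real.pi * Complex.I * l * n / q)) := by
    rw [Finset.sum_filter]
    refine Finset.sum_congr rfl fun n _ => ?_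
    rw [orth q hq n]
    by_cases hdvd : q ∣ n
    · rw [if_pos hdvd, if_pos hdvd]
      push_cast
      field_simp
    · rw [if_neg hdvd, if_neg hdvd]
      simp
  rw [hfilter]
  -- swap sums
  have hswap : ∑ n ∈ Finset.range (2 ^ m),
        ((ρ : ℂ) ^ (m - (Nat.digits 2 n).sum) * (1 - (ρ : ℂ)) ^ (Nat.digits 2 n).sum) *
          ((1 / q) * ∑ l ∈ Finset.range q, Complex.exp (2 * Real.pi * Complex.I * l * n / q))
      = (1 / q) * ∑ l ∈ Finset.range q, ∑ n ∈ Finset.range (2 ^ m),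
          ((ρ : ℂ) ^ (m - (Nat.digits 2 n).sum) * (1 - (ρ : ℂ)) ^ (Nat.digits 2 n).sum) *
            Complex.exp (2 * Real.pi * Complex.I * l * n / q) := by
    simp only [Finset.mul_sum]
    rw [Finset.sum_comm]
    exact Finset.sum_congr rfl fun l _ => Finset.sum_congr rfl fun n _ => by ring
  rw [hswap]
  -- inner sum is the product
  have hinner : ∀ l : ℕ, ∑ n ∈ Finset.range (2 ^ m),
        ((ρ : ℂ) ^ (m - (Nat.digits 2 n).sum) * (1 - (ρ : ℂ)) ^ (Nat.digits 2 n).sum) *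
          Complex.exp (2 * Real.pi * Complex.I * l * n / q)
      = ∏ j ∈ Finset.range m, ((ρ : ℂ) + (1 - ρ) * Complex.exp (2 * Real.pi * Complex.I * l * 2 ^ j / q)) := by
    intro l
    have hzn : ∀ n : ℕ, Complex.exp (2 * Real.pi * Complex.I * l * n / q)
        = (Complex.exp (2 * Real.pi * Complex.I * l / q)) ^ n := by
      intro n
      rw [← Complex.exp_nat_mul]; ring_nf
    simp only [hzn]
    rw [key_sum m (ρ : ℂ) (Complex.exp (2 * Real.pi * Complex.I * l / q))]
    refine Finset.prod_congr rfl fun j _ => ?_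
    rw [← Complex.exp_nat_mul]
    have harg : ((2 ^ j : ℕ) : ℂ) * (2 * Real.pi * Complex.I * l / q)
        = 2 * Real.pi * Complex.I * l * 2 ^ j / q := by push_cast; ring
    rw [harg]
  simp only [hinner]
  -- split off l = 0
  have h0 : Finset.range q = insert 0 (Finset.Ico 1 q) := by
    ext x
    simp [Finset.mem_range, Finset.mem_Ico]
    omega
  rw [h0, Finset.sum_insert (by simp)]
  have hzero : ∏ j ∈ Finset.range m,
      ((ρ : ℂ) + (1 - ρ) * Complex.exp (2 * Real.pi * Complex.I * (0 : ℕ) * 2 ^ j / q)) = 1 := by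
    refine Finset.prod_eq_one fun j _ => ?_
    norm_num
  rw [hzero]
  ring
end
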